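/- Let M=(E,𝓘) be a matroid with m = r_M(E). Then χ̃_M = Σ_{F ⊆ E} (−1)^{|F|} x^{m − r_M(F)} in ℤ[x]. -/

import Mathlib

open scoped Classical

noncomputable section

/-- The rank function of the matroid `(E, 𝓘)` (with ground set the whole type `α`):
`r_M(S) = max { |Z| : Z ∈ 𝓘, Z ⊆ S }`. -/
def mrank {α : Type*} [DecidableEq α] (𝓘 : Finset (Finset α)) (S : Finset α) : ℕ :=
  (𝓘.filter fun Z => Z ⊆ S).sup Finset.card

/-- `T` is a flat of the matroid `(E, 𝓘)`: for some `k`, the set `T` has rank `k` and is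
maximal (under inclusion) among subsets of the ground set of rank `k`. -/
def IsFlat {α : Type*} [DecidableEq α] (𝓘 : Finset (Finset α)) (T : Finset α) : Prop :=
  ∃ k, mrank 𝓘 T = k ∧ ∀ W : Finset α, mrank 𝓘 W = k → T ⊆ W → W = T

/-- `C` is a circuit of the matroid `(E, 𝓘)`: a minimal element of `𝒫(E) ∖ 𝓘`. -/
def IsCircuitM {α : Type*} (𝓘 : Finset (Finset α)) (C : Finset α) : Prop :=
  C ∉ 𝓘 ∧ ∀ D : Finset α, D ∉ 𝓘 → D ⊆ C → D = C

/-- The closure `T̄` of `T`: the intersection of all flats of the matroid containing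
`T`. -/
def mclosure {α : Type*} [Fintype α] [DecidableEq α] (𝓘 : Finset (Finset α))
    (T : Finset α) : Finset α :=
  Finset.univ.filter fun x => ∀ G : Finset α, IsFlat 𝓘 G → T ⊆ G → x ∈ G

/-- A broken circuit of the matroid `(E, 𝓘)` (with respect to the labeling function
`ℓ`): a set of the form `C \ {e}`, where `C` is a circuit of `M` and `e` is the unique
element of `C` attaining the maximum label among the elements of `C`. -/
def IsBrokenCircuitM {α X : Type*} [LinearOrder X] (𝓘 : Finset (Finset α))
    (ℓ : α → X) (K : Finset α) : Prop :=
  ∃ C e, IsCircuitM 𝓘 C ∧ e ∈ C ∧ (∀ e' ∈ C, e' ≠ e → ℓ e' < ℓ e) ∧ K = C.erase e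

set_option linter.unusedSectionVars false
set_option linter.unusedVariables false

section AuxMatroid

variable {α : Type*} [Fintype α] [DecidableEq α] {𝓘 : Finset (Finset α)}

lemma mrank_mono (𝓘 : Finset (Finset α)) {S S' : Finset α} (h : S ⊆ S') :
    mrank 𝓘 S ≤ mrank 𝓘 S' :=
  Finset.sup_mono (Finset.monotone_filter_right _ (fun Z _ hZ => hZ.trans h))

lemma card_le_mrank {Z S : Finset α} (hZ : Z ∈ 𝓘) (hZS : Z ⊆ S) : Z.card ≤ mrank 𝓘 S :=
  Finset.le_sup (Finset.mem_filter.2 ⟨hZ, hZS⟩)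

lemma mrank_empty (𝓘 : Finset (Finset α)) : mrank 𝓘 (∅ : Finset α) = 0 := by
  apply Nat.le_antisymm _ (Nat.zero_le _)
  apply Finset.sup_le
  intro Z hZ
  rw [Finset.mem_filter, Finset.subset_empty] at hZ
  simp [hZ.2]

lemma exists_basis (h1 : ∅ ∈ 𝓘) (S : Finset α) :
    ∃ B, B ∈ 𝓘 ∧ B ⊆ S ∧ B.card = mrank 𝓘 S := by
  obtain ⟨B, hB, hc⟩ := Finset.exists_mem_eq_sup (𝓘.filter fun Z => Z ⊆ S)
    ⟨∅, Finset.mem_filter.2 ⟨h1, Finset.empty_subset _⟩⟩ Finset.card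
  rw [Finset.mem_filter] at hB
  exact ⟨B, hB.1, hB.2, hc.symm⟩

/-- A maximal independent subset of `S` has cardinality `mrank 𝓘 S`. -/
lemma maximal_card_eq_mrank (h1 : ∅ ∈ 𝓘)
    (h3 : ∀ Y ∈ 𝓘, ∀ Z ∈ 𝓘, Y.card < Z.card → ∃ x ∈ Z \ Y, insert x Y ∈ 𝓘)
    {B S : Finset α} (hB : B ∈ 𝓘) (hBS : B ⊆ S)
    (hmax : ∀ y ∈ S, y ∉ B → insert y B ∉ 𝓘) : B.card = mrank 𝓘 S := by
  refine Nat.le_antisymm (card_le_mrank hB hBS) ?_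
  by_contra hlt
  push_neg at hlt
  obtain ⟨Z, hZ, hZS, hZc⟩ := exists_basis h1 S
  obtain ⟨x, hx, hins⟩ := h3 B hB Z hZ (by omega)
  rw [Finset.mem_sdiff] at hx
  exact hmax x (hZS hx.1) hx.2 hins

/-- Basis extension. -/
lemma basis_extend (h1 : ∅ ∈ 𝓘)
    (h3 : ∀ Y ∈ 𝓘, ∀ Z ∈ 𝓘, Y.card < Z.card → ∃ x ∈ Z \ Y, insert x Y ∈ 𝓘)
    {B S : Finset α} (hB : B ∈ 𝓘) (hBS : B ⊆ S) :
    ∃ B', B ⊆ B' ∧ B' ⊆ S ∧ B' ∈ 𝓘 ∧ B'.card = mrank 𝓘 S := by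
  obtain ⟨n, hn⟩ : ∃ n, n = mrank 𝓘 S - B.card := ⟨_, rfl⟩
  induction n generalizing B with
  | zero =>
    refine ⟨B, subset_rfl, hBS, hB, Nat.le_antisymm (card_le_mrank hB hBS) (by omega)⟩
  | succ n ih =>
    obtain ⟨Z, hZ, hZS, hZc⟩ := exists_basis h1 S
    have hlt : B.card < Z.card := by omega
    obtain ⟨x, hx, hins⟩ := h3 B hB Z hZ hlt
    rw [Finset.mem_sdiff] at hx
    have hxS : insert x B ⊆ S := Finset.insert_subset (hZS hx.1) hBS
    obtain ⟨B', h₁, h₂, h₃, h₄⟩ := ih hins hxS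
      (by rw [Finset.card_insert_of_notMem hx.2]; omega)
    exact ⟨B', (Finset.subset_insert _ _).trans h₁, h₂, h₃, h₄⟩

/-- If each element of `A` doesn't increase rank of `T`, then `T ∪ A` has the same rank. -/
lemma mrank_union_eq (h1 : ∅ ∈ 𝓘)
    (h3 : ∀ Y ∈ 𝓘, ∀ Z ∈ 𝓘, Y.card < Z.card → ∃ x ∈ Z \ Y, insert x Y ∈ 𝓘)
    {T A : Finset α} (hA : ∀ x ∈ A, mrank 𝓘 (insert x T) = mrank 𝓘 T) :
    mrank 𝓘 (T ∪ A) = mrank 𝓘 T := by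
  obtain ⟨B, hB, hBT, hBc⟩ := exists_basis h1 T
  have hmax : ∀ y ∈ T ∪ A, y ∉ B → insert y B ∉ 𝓘 := by
    intro y hy hyB hins
    by_cases hyT : y ∈ T
    · have := card_le_mrank hins (Finset.insert_subset hyT hBT)
      rw [Finset.card_insert_of_notMem hyB] at this
      omega
    · have hyA : y ∈ A := by
        rcases Finset.mem_union.1 hy with h | h
        · exact absurd h hyT
        · exact h
      have := card_le_mrank hins (Finset.insert_subset_insert _ hBT)
      rw [Finset.card_insert_of_notMem hyB, hA y hyA] at this
      omega
  have := maximal_card_eq_mrank h1 h3 hB (hBT.trans Finset.subset_union_left) hmax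
  omega

/-- If `x` doesn't increase rank of `T ⊆ G`, it doesn't increase rank of `G`. -/
lemma mrank_insert_eq_of_subset (h1 : ∅ ∈ 𝓘)
    (h2 : ∀ Y ∈ 𝓘, ∀ Z : Finset α, Z ⊆ Y → Z ∈ 𝓘)
    (h3 : ∀ Y ∈ 𝓘, ∀ Z ∈ 𝓘, Y.card < Z.card → ∃ x ∈ Z \ Y, insert x Y ∈ 𝓘)
    {T G : Finset α} {x : α} (hTG : T ⊆ G)
    (hx : mrank 𝓘 (insert x T) = mrank 𝓘 T) :
    mrank 𝓘 (insert x G) = mrank 𝓘 G := by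
  by_cases hxG : x ∈ G
  · rw [Finset.insert_eq_self.2 hxG]
  obtain ⟨B, hB, hBT, hBc⟩ := exists_basis h1 T
  obtain ⟨B', hBB', hB'G, hB', hB'c⟩ := basis_extend h1 h3 hB (hBT.trans hTG)
  have hxB' : x ∉ B' := fun h => hxG (hB'G h)
  have hmax : ∀ y ∈ insert x G, y ∉ B' → insert y B' ∉ 𝓘 := by
    intro y hy hyB' hins
    rcases Finset.mem_insert.1 hy with rfl | hyG
    · have hyB : y ∉ B := fun h => hxG (hB'G (hBB' h))
      have hBy : insert y B ∈ 𝓘 :=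
        h2 _ hins _ (Finset.insert_subset_insert _ hBB')
      have := card_le_mrank hBy (Finset.insert_subset_insert _ hBT)
      rw [Finset.card_insert_of_notMem hyB, hx] at this
      omega
    · have := card_le_mrank hins (Finset.insert_subset hyG hB'G)
      rw [Finset.card_insert_of_notMem hyB'] at this
      omega
  have := maximal_card_eq_mrank h1 h3 hB'
    (hB'G.trans (Finset.subset_insert _ _)) hmax
  omega

/-- The "rank closure" of `T`. -/
def rcl (𝓘 : Finset (Finset α)) (T : Finset α) : Finset α :=
  T ∪ Finset.univ.filter fun x => mrank 𝓘 (insert x T) = mrank 𝓘 T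

lemma subset_rcl (T : Finset α) : T ⊆ rcl 𝓘 T := Finset.subset_union_left

lemma mrank_rcl (h1 : ∅ ∈ 𝓘)
    (h3 : ∀ Y ∈ 𝓘, ∀ Z ∈ 𝓘, Y.card < Z.card → ∃ x ∈ Z \ Y, insert x Y ∈ 𝓘)
    (T : Finset α) : mrank 𝓘 (rcl 𝓘 T) = mrank 𝓘 T :=
  mrank_union_eq h1 h3 (fun x hx => (Finset.mem_filter.1 hx).2)

lemma isFlat_rcl (h1 : ∅ ∈ 𝓘)
    (h3 : ∀ Y ∈ 𝓘, ∀ Z ∈ 𝓘, Y.card < Z.card → ∃ x ∈ Z \ Y, insert x Y ∈ 𝓘)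
    (T : Finset α) : IsFlat 𝓘 (rcl 𝓘 T) := by
  refine ⟨mrank 𝓘 T, mrank_rcl h1 h3 T, fun W hW hsub => ?_⟩
  refine Finset.Subset.antisymm (fun x hxW => ?_) hsub
  have hTW : T ⊆ W := (subset_rcl T).trans hsub
  have hle : mrank 𝓘 (insert x T) ≤ mrank 𝓘 T := by
    calc mrank 𝓘 (insert x T) ≤ mrank 𝓘 W :=
          mrank_mono 𝓘 (Finset.insert_subset hxW hTW)
    _ = mrank 𝓘 T := hW
  show x ∈ T ∪ Finset.univ.filter fun x => mrank 𝓘 (insert x T) = mrank 𝓘 T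
  exact Finset.mem_union_right _ (Finset.mem_filter.2 ⟨Finset.mem_univ x,
    Nat.le_antisymm hle (mrank_mono 𝓘 (Finset.subset_insert _ _))⟩)

lemma mclosure_subset_of_flat {T G : Finset α} (hG : IsFlat 𝓘 G) (hTG : T ⊆ G) :
    mclosure 𝓘 T ⊆ G := fun x hx => (Finset.mem_filter.1 hx).2 G hG hTG

lemma mclosure_eq_rcl (h1 : ∅ ∈ 𝓘)
    (h2 : ∀ Y ∈ 𝓘, ∀ Z : Finset α, Z ⊆ Y → Z ∈ 𝓘)
    (h3 : ∀ Y ∈ 𝓘, ∀ Z ∈ 𝓘, Y.card < Z.card → ∃ x ∈ Z \ Y, insert x Y ∈ 𝓘)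
    (T : Finset α) : mclosure 𝓘 T = rcl 𝓘 T := by
  apply Finset.Subset.antisymm
  · exact mclosure_subset_of_flat (isFlat_rcl h1 h3 T) (subset_rcl T)
  · intro x hx
    refine Finset.mem_filter.2 ⟨Finset.mem_univ _, fun G hG hTG => ?_⟩
    rcases Finset.mem_union.1 hx with hxT | hxf
    · exact hTG hxT
    · have hr : mrank 𝓘 (insert x T) = mrank 𝓘 T := (Finset.mem_filter.1 hxf).2
      have hrG : mrank 𝓘 (insert x G) = mrank 𝓘 G :=
        mrank_insert_eq_of_subset h1 h2 h3 hTG hr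
      obtain ⟨k, hk, hmax⟩ := hG
      have := hmax (insert x G) (by rw [hrG, hk]) (Finset.subset_insert _ _)
      rw [← this]
      exact Finset.mem_insert_self _ _

lemma subset_mclosure (T : Finset α) : T ⊆ mclosure 𝓘 T :=
  fun x hx => Finset.mem_filter.2 ⟨Finset.mem_univ _, fun G _ hTG => hTG hx⟩

lemma isFlat_mclosure (h1 : ∅ ∈ 𝓘)
    (h2 : ∀ Y ∈ 𝓘, ∀ Z : Finset α, Z ⊆ Y → Z ∈ 𝓘)
    (h3 : ∀ Y ∈ 𝓘, ∀ Z ∈ 𝓘, Y.card < Z.card → ∃ x ∈ Z \ Y, insert x Y ∈ 𝓘)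
    (T : Finset α) : IsFlat 𝓘 (mclosure 𝓘 T) := by
  rw [mclosure_eq_rcl h1 h2 h3]; exact isFlat_rcl h1 h3 T

lemma mrank_mclosure (h1 : ∅ ∈ 𝓘)
    (h2 : ∀ Y ∈ 𝓘, ∀ Z : Finset α, Z ⊆ Y → Z ∈ 𝓘)
    (h3 : ∀ Y ∈ 𝓘, ∀ Z ∈ 𝓘, Y.card < Z.card → ∃ x ∈ Z \ Y, insert x Y ∈ 𝓘)
    (T : Finset α) : mrank 𝓘 (mclosure 𝓘 T) = mrank 𝓘 T := by
  rw [mclosure_eq_rcl h1 h2 h3]; exact mrank_rcl h1 h3 T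

lemma whitney_mu (h1 : ∅ ∈ 𝓘)
    (h2 : ∀ Y ∈ 𝓘, ∀ Z : Finset α, Z ⊆ Y → Z ∈ 𝓘)
    (h3 : ∀ Y ∈ 𝓘, ∀ Z ∈ 𝓘, Y.card < Z.card → ∃ x ∈ Z \ Y, insert x Y ∈ 𝓘)
    (μ : Finset α → Finset α → ℤ)
    (hμ1 : ∀ T : Finset α, IsFlat 𝓘 T → μ T T = 1)
    (hμ2 : ∀ T S : Finset α, IsFlat 𝓘 T → IsFlat 𝓘 S → T ⊂ S →
      μ T S = -∑ Z ∈ Finset.univ.filter (fun Z : Finset α => IsFlat 𝓘 Z ∧ T ⊆ Z ∧ Z ⊂ S),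
        μ T Z)
    (hcl : mclosure 𝓘 ∅ = ∅) :
    ∀ (n : ℕ) (G : Finset α), G.card = n → IsFlat 𝓘 G →
      (∑ S ∈ Finset.univ.filter (fun S : Finset α => mclosure 𝓘 S = G),
        (-1 : ℤ) ^ S.card) = μ ∅ G := by
  have hflat_empty : IsFlat 𝓘 (∅ : Finset α) := hcl ▸ isFlat_mclosure h1 h2 h3 ∅
  intro n
  induction n using Nat.strong_induction_on with
  | _ n ih =>
    intro G hGc hG
    rcases Finset.eq_empty_or_nonempty G with rfl | hGne
    · have hfil : Finset.univ.filter (fun S : Finset α => mclosure 𝓘 S = ∅) = {∅} := by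
        ext S
        simp only [Finset.mem_filter, Finset.mem_univ, true_and, Finset.mem_singleton]
        constructor
        · intro h
          exact Finset.subset_empty.1 ((subset_mclosure S).trans (Finset.le_iff_subset.1 h.le))
        · rintro rfl; exact hcl
      rw [hfil, Finset.sum_singleton, Finset.card_empty, pow_zero, hμ1 _ hflat_empty]
    · -- G nonempty
      set T := Finset.univ.filter (fun Z : Finset α => IsFlat 𝓘 Z ∧ Z ⊆ G) with hT
      set T' := Finset.univ.filter (fun Z : Finset α => IsFlat 𝓘 Z ∧ Z ⊂ G) with hT'
      have hmap : ∀ S ∈ G.powerset, mclosure 𝓘 S ∈ T := by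
        intro S hS
        exact Finset.mem_filter.2 ⟨Finset.mem_univ _, isFlat_mclosure h1 h2 h3 S,
          mclosure_subset_of_flat hG (Finset.mem_powerset.1 hS)⟩
      have hstep := Finset.sum_fiberwise_of_maps_to hmap (fun S => (-1 : ℤ) ^ S.card)
      rw [Finset.sum_powerset_neg_one_pow_card, if_neg (Finset.nonempty_iff_ne_empty.1 hGne)]
        at hstep
      have hfib : ∀ Z ∈ T, (G.powerset.filter fun S => mclosure 𝓘 S = Z)
          = Finset.univ.filter fun S : Finset α => mclosure 𝓘 S = Z := by
        intro Z hZ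
        ext S
        simp only [Finset.mem_filter, Finset.mem_powerset, Finset.mem_univ, true_and]
        constructor
        · exact fun h => h.2
        · intro h
          exact ⟨(subset_mclosure S).trans (h ▸ (Finset.mem_filter.1 hZ).2.2), h⟩
      rw [Finset.sum_congr rfl (fun Z hZ => by rw [hfib Z hZ])] at hstep
      -- split off G from T
      have hGT' : G ∉ T' := by
        simp only [hT', Finset.mem_filter]
        rintro ⟨-, -, h⟩; exact h.2 subset_rfl
      have hTsplit : T = insert G T' := by
        ext Z
        simp only [hT, hT', Finset.mem_filter, Finset.mem_univ, true_and, Finset.mem_insert]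
        constructor
        · rintro ⟨hZf, hZG⟩
          rcases hZG.ssubset_or_eq with h | h
          · exact Or.inr ⟨hZf, h⟩
          · exact Or.inl h
        · rintro (rfl | ⟨hZf, hZG⟩)
          · exact ⟨hG, subset_rfl⟩
          · exact ⟨hZf, hZG.subset⟩
      rw [hTsplit, Finset.sum_insert hGT'] at hstep
      have hih : ∀ Z ∈ T', (∑ S ∈ Finset.univ.filter
          (fun S : Finset α => mclosure 𝓘 S = Z), (-1 : ℤ) ^ S.card) = μ ∅ Z := by
        intro Z hZ
        obtain ⟨-, hZf, hZG⟩ := Finset.mem_filter.1 hZ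
        exact ih Z.card (hGc ▸ Finset.card_lt_card hZG) Z rfl hZf
      rw [Finset.sum_congr rfl hih] at hstep
      have hμ := hμ2 ∅ G hflat_empty hG (Finset.empty_ssubset.2 hGne)
      have hfilts : Finset.univ.filter
          (fun Z : Finset α => IsFlat 𝓘 Z ∧ ∅ ⊆ Z ∧ Z ⊂ G) = T' := by
        apply Finset.filter_congr
        intro Z _
        simp [Finset.empty_subset]
      rw [hfilts] at hμ
      rw [hμ]
      linarith [hstep]

end AuxMatroid

/-- Let `M = (E, 𝓘)` be a matroid (ground set the whole finite type
`α`), with `m = r_M(E)`. Let `μ` be the Möbius function of the poset of flats of `M`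
(characterized by `μ(x,x) = 1` and `∑_{x ≤ z ≤ y} μ(x,z) = 0` for flats `x < y`, i.e.
`μ(x,y) = −∑_{x ≤ z < y} μ(x,z)`). Then the polynomial
`χ̃_M = [∅̄ = ∅] · ∑_{F flat} μ(∅̄, F) x^{m − r_M(F)}` satisfies
`χ̃_M = ∑_{F ⊆ E} (−1)^{|F|} x^{m − r_M(F)}` in `ℤ[x]`. -/
theorem matroid_charPoly_eq_sum_powerset
    {α : Type*} [Fintype α] [DecidableEq α]
    (𝓘 : Finset (Finset α))
    (h1 : ∅ ∈ 𝓘)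
    (h2 : ∀ Y ∈ 𝓘, ∀ Z : Finset α, Z ⊆ Y → Z ∈ 𝓘)
    (h3 : ∀ Y ∈ 𝓘, ∀ Z ∈ 𝓘, Y.card < Z.card → ∃ x ∈ Z \ Y, insert x Y ∈ 𝓘)
    (μ : Finset α → Finset α → ℤ)
    (hμ1 : ∀ T : Finset α, IsFlat 𝓘 T → μ T T = 1)
    (hμ2 : ∀ T S : Finset α, IsFlat 𝓘 T → IsFlat 𝓘 S → T ⊂ S →
      μ T S = -∑ Z ∈ Finset.univ.filter (fun Z : Finset α => IsFlat 𝓘 Z ∧ T ⊆ Z ∧ Z ⊂ S),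
        μ T Z) :
    (if mclosure 𝓘 ∅ = (∅ : Finset α) then
        ∑ F ∈ Finset.univ.filter (fun F : Finset α => IsFlat 𝓘 F),
          Polynomial.C (μ (mclosure 𝓘 ∅) F) *
            Polynomial.X ^ (mrank 𝓘 Finset.univ - mrank 𝓘 F)
      else 0) =
      ∑ F : Finset α,
        (-1 : Polynomial ℤ) ^ F.card *
          Polynomial.X ^ (mrank 𝓘 Finset.univ - mrank 𝓘 F) := by
  by_cases hcl : mclosure 𝓘 ∅ = (∅ : Finset α)
  · rw [if_pos hcl, hcl]
    have hmap : ∀ S ∈ (Finset.univ : Finset (Finset α)),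
        mclosure 𝓘 S ∈ Finset.univ.filter (fun F : Finset α => IsFlat 𝓘 F) :=
      fun S _ => Finset.mem_filter.2 ⟨Finset.mem_univ _, isFlat_mclosure h1 h2 h3 S⟩
    rw [← Finset.sum_fiberwise_of_maps_to hmap (fun F : Finset α =>
      (-1 : Polynomial ℤ) ^ F.card * Polynomial.X ^ (mrank 𝓘 Finset.univ - mrank 𝓘 F))]
    apply Finset.sum_congr rfl
    intro G hG
    have hGf : IsFlat 𝓘 G := (Finset.mem_filter.1 hG).2
    rw [← whitney_mu h1 h2 h3 μ hμ1 hμ2 hcl G.card G rfl hGf]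
    have hin : ∀ S ∈ Finset.univ.filter (fun S : Finset α => mclosure 𝓘 S = G),
        (-1 : Polynomial ℤ) ^ S.card * Polynomial.X ^ (mrank 𝓘 Finset.univ - mrank 𝓘 S)
          = Polynomial.C ((-1 : ℤ) ^ S.card) *
              Polynomial.X ^ (mrank 𝓘 Finset.univ - mrank 𝓘 G) := by
      intro S hS
      have hclS : mclosure 𝓘 S = G := (Finset.mem_filter.1 hS).2
      have hr : mrank 𝓘 S = mrank 𝓘 G := by
        rw [← hclS, mrank_mclosure h1 h2 h3]
      rw [hr, map_pow, map_neg, map_one]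
    rw [Finset.sum_congr rfl hin, ← Finset.sum_mul, map_sum]
  · rw [if_neg hcl]
    -- there is a loop `e`
    obtain ⟨e, he⟩ := Finset.nonempty_iff_ne_empty.2 hcl
    rw [mclosure_eq_rcl h1 h2 h3] at he
    have he' : mrank 𝓘 (insert e ∅) = mrank 𝓘 (∅ : Finset α) := by
      rcases Finset.mem_union.1 he with h | h
      · exact absurd h (Finset.notMem_empty e)
      · exact (Finset.mem_filter.1 h).2
    have key : ∀ S : Finset α, mrank 𝓘 (insert e S) = mrank 𝓘 S :=
      fun S => mrank_insert_eq_of_subset h1 h2 h3 (Finset.empty_subset S) he'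
    set f : Finset α → Polynomial ℤ := fun F =>
      (-1 : Polynomial ℤ) ^ F.card * Polynomial.X ^ (mrank 𝓘 Finset.univ - mrank 𝓘 F)
      with hf
    have hterm : ∀ U : Finset α, e ∉ U → f (insert e U) + f U = 0 := by
      intro U heU
      simp only [hf]
      rw [Finset.card_insert_of_notMem heU, key U, pow_succ]
      ring
    set g : Finset α → Finset α := fun S => if e ∈ S then S.erase e else insert e S
      with hg
    symm
    apply Finset.sum_ninvolution g
    · intro S
      by_cases heS : e ∈ S
      · have hgS : g S = S.erase e := if_pos heS
        have := hterm (S.erase e) (Finset.notMem_erase e S)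
        rw [Finset.insert_erase heS] at this
        rw [hgS]
        exact this
      · have hgS : g S = insert e S := if_neg heS
        rw [hgS, add_comm]
        exact hterm S heS
    · intro S _
      by_cases heS : e ∈ S
      · simp only [hg, if_pos heS]
        intro h
        exact (Finset.erase_eq_self.1 h) heS
      · simp only [hg, if_neg heS]
        intro h
        exact heS (Finset.insert_eq_self.1 h)
    · intro S; exact Finset.mem_univ _
    · intro S
      by_cases heS : e ∈ S
      · simp [hg, heS, Finset.notMem_erase, Finset.insert_erase heS]
      · simp [hg, heS, Finset.erase_insert heS]
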